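/- Let T be a two-layer subposet of the Boolean lattice closed under intersection with h ≥ 2 upper nodes of cardinality ℓ, and suppose every lower node has at most 2 predecessors (Situation 1). Let N' be the union of all upper nodes. Then ℓ = |N'| − 1 (every upper node has the form N' \ {i}), and the lower layer contains exactly h(h−1)/2 nodes having exactly 2 predecessors. -/
import Mathlib


variable {N : Type*} [DecidableEq N]

/-- Predecessors of a lower node `y`: upper nodes strictly containing `y`. -/
def precs (Upper : Finset (Finset N)) (y : Finset N) : Finset (Finset N) :=
  Upper.filter fun x => y ⊂ x

/-- Situation 1: a two-layer subposet closed under intersection with `h ≥ 2` upper nodes of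
cardinality `ℓ`, in which every lower node has at most `2` predecessors. Then, with
`N' = ⋃ upper nodes`, one has `ℓ = |N'| − 1` (every upper node is of the form `N' \ {i}`)
and exactly `h(h−1)/2` lower nodes have exactly `2` predecessors. -/
theorem situation1_characterization (Upper Lower : Finset (Finset N)) (ℓ : ℕ)
    (hℓ : 2 ≤ ℓ)
    (hU : ∀ x ∈ Upper, x.card = ℓ) (hL : ∀ y ∈ Lower, y.card = ℓ - 1)
    (hclosed : ∀ x ∈ Upper, ∀ x' ∈ Upper, x ≠ x' → x ∩ x' ∈ Lower)
    (hh : 2 ≤ Upper.card)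
    (hsit1 : ∀ y ∈ Lower, (precs Upper y).card ≤ 2) :
    ℓ = (Upper.sup id).card - 1 ∧
    (∀ x ∈ Upper, ∃ i ∈ Upper.sup id, x = (Upper.sup id).erase i) ∧
    (Lower.filter fun y => (precs Upper y).card = 2).card
      = Upper.card * (Upper.card - 1) / 2 := by
  classical
  obtain ⟨x₀, hx₀, x₁, hx₁, hne⟩ := Finset.one_lt_card.mp hh
  have hcardinter : ∀ x ∈ Upper, ∀ x' ∈ Upper, x ≠ x' → (x ∩ x').card = ℓ - 1 :=
    fun x hx x' hx' h => hL _ (hclosed x hx x' hx' h)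
  have hmemprecs : ∀ z ∈ Upper, ∀ y : Finset N, y.card = ℓ - 1 → y ⊆ z →
      z ∈ precs Upper y := by
    intro z hz y hyc hyz
    refine Finset.mem_filter.mpr ⟨hz, hyz, fun hcon => ?_⟩
    have := Finset.card_le_card hcon
    rw [hU z hz] at this
    omega
  have hsub : ∀ x ∈ Upper, x ⊆ x₀ ∪ x₁ := by
    intro x hx
    by_contra hns
    have hxx0 : x ≠ x₀ := fun h => hns (h ▸ Finset.subset_union_left)
    have hxx1 : x ≠ x₁ := fun h => hns (h ▸ Finset.subset_union_right)
    have h1 : x ∩ (x₀ ∪ x₁) ⊂ x := by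
      refine ⟨Finset.inter_subset_left, fun h => hns fun a ha => ?_⟩
      exact (Finset.mem_inter.mp (h ha)).2
    have hcard1 : (x ∩ (x₀ ∪ x₁)).card < ℓ := hU x hx ▸ Finset.card_lt_card h1
    have h0eq : x ∩ x₀ = x ∩ (x₀ ∪ x₁) := by
      apply Finset.eq_of_subset_of_card_le
        (Finset.inter_subset_inter Finset.Subset.rfl Finset.subset_union_left)
      rw [hcardinter x hx x₀ hx₀ hxx0]; omega
    have h1eq : x ∩ x₁ = x ∩ (x₀ ∪ x₁) := by
      apply Finset.eq_of_subset_of_card_le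
        (Finset.inter_subset_inter Finset.Subset.rfl Finset.subset_union_right)
      rw [hcardinter x hx x₁ hx₁ hxx1]; omega
    have hy' : x ∩ x₀ ⊆ x₀ ∩ x₁ := by
      intro a ha
      have ha' : a ∈ x ∩ x₁ := by rw [h1eq, ← h0eq]; exact ha
      exact Finset.mem_inter.mpr ⟨(Finset.mem_inter.mp ha).2, (Finset.mem_inter.mp ha').2⟩
    have hyeq : x ∩ x₀ = x₀ ∩ x₁ := by
      apply Finset.eq_of_subset_of_card_le hy'
      rw [hcardinter x hx x₀ hx₀ hxx0, hcardinter x₀ hx₀ x₁ hx₁ hne]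
    have hyL : x₀ ∩ x₁ ∈ Lower := hclosed _ hx₀ _ hx₁ hne
    have hyc : (x₀ ∩ x₁).card = ℓ - 1 := hcardinter x₀ hx₀ x₁ hx₁ hne
    have h3 : ({x, x₀, x₁} : Finset (Finset N)) ⊆ precs Upper (x₀ ∩ x₁) := by
      intro z hz
      simp only [Finset.mem_insert, Finset.mem_singleton] at hz
      rcases hz with rfl | rfl | rfl
      · exact hmemprecs _ hx _ hyc (by rw [← hyeq]; exact Finset.inter_subset_left)
      · exact hmemprecs _ hx₀ _ hyc Finset.inter_subset_left
      · exact hmemprecs _ hx₁ _ hyc Finset.inter_subset_right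
    have hc3 : ({x, x₀, x₁} : Finset (Finset N)).card = 3 := by
      rw [Finset.card_insert_of_notMem (by simp [hxx0, hxx1]),
        Finset.card_insert_of_notMem (by simp [hne]), Finset.card_singleton]
    have hle := Finset.card_le_card h3
    have := hsit1 _ hyL
    omega
  have hSeq : Upper.sup id = x₀ ∪ x₁ := by
    apply Finset.Subset.antisymm
    · exact Finset.sup_le fun x hx => hsub x hx
    · exact Finset.union_subset (Finset.le_sup (f := id) hx₀) (Finset.le_sup (f := id) hx₁)
  have hScard : (Upper.sup id).card = ℓ + 1 := by
    have h1 := Finset.card_union_add_card_inter x₀ x₁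
    rw [hU _ hx₀, hU _ hx₁, hcardinter x₀ hx₀ x₁ hx₁ hne] at h1
    rw [hSeq]; omega
  refine ⟨by omega, ?_, ?_⟩
  · intro x hx
    have hxS : x ⊆ Upper.sup id := Finset.le_sup (f := id) hx
    have hd : ((Upper.sup id) \ x).card = 1 := by
      rw [Finset.card_sdiff_of_subset hxS, hScard, hU x hx]; omega
    obtain ⟨i, hi⟩ := Finset.card_eq_one.mp hd
    have hiS : i ∈ (Upper.sup id) \ x := hi ▸ Finset.mem_singleton_self i
    refine ⟨i, (Finset.mem_sdiff.mp hiS).1, ?_⟩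
    apply Finset.eq_of_subset_of_card_le
    · exact Finset.subset_erase.mpr ⟨hxS, (Finset.mem_sdiff.mp hiS).2⟩
    · rw [Finset.card_erase_of_mem (Finset.mem_sdiff.mp hiS).1, hScard, hU x hx]; omega
  · have hbij : (Lower.filter fun y => (precs Upper y).card = 2).card
        = (Upper.powersetCard 2).card := by
      apply Finset.card_bij (fun y _ => precs Upper y)
      · intro y hy
        rw [Finset.mem_powersetCard]
        exact ⟨Finset.filter_subset _ _, (Finset.mem_filter.mp hy).2⟩
      · intro y hy y' hy' heq
        obtain ⟨hyL, hy2⟩ := Finset.mem_filter.mp hy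
        obtain ⟨hy'L, _⟩ := Finset.mem_filter.mp hy'
        obtain ⟨a, b, hab, h2⟩ := Finset.card_eq_two.mp hy2
        have key : ∀ w : Finset N, w ∈ Lower → precs Upper w = {a, b} → w = a ∩ b := by
          intro w hwL hw
          have ha : a ∈ precs Upper w := hw ▸ Finset.mem_insert_self a {b}
          have hb : b ∈ precs Upper w := hw ▸ Finset.mem_insert_of_mem (Finset.mem_singleton_self b)
          obtain ⟨haU, haw⟩ := Finset.mem_filter.mp ha
          obtain ⟨hbU, hbw⟩ := Finset.mem_filter.mp hb
          apply Finset.eq_of_subset_of_card_le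
            (Finset.subset_inter haw.subset hbw.subset)
          rw [hcardinter a haU b hbU hab, hL _ hwL]
        rw [key y hyL h2, key y' hy'L (heq ▸ h2)]
      · intro p hp
        rw [Finset.mem_powersetCard] at hp
        obtain ⟨a, b, hab, h2⟩ := Finset.card_eq_two.mp hp.2
        have haU : a ∈ Upper := hp.1 (h2 ▸ Finset.mem_insert_self a {b})
        have hbU : b ∈ Upper := hp.1 (h2 ▸ Finset.mem_insert_of_mem (Finset.mem_singleton_self b))
        have hyL : a ∩ b ∈ Lower := hclosed a haU b hbU hab
        have hyc : (a ∩ b).card = ℓ - 1 := hcardinter a haU b hbU hab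
        have hsubp : ({a, b} : Finset (Finset N)) ⊆ precs Upper (a ∩ b) := by
          intro z hz
          simp only [Finset.mem_insert, Finset.mem_singleton] at hz
          rcases hz with rfl | rfl
          · exact hmemprecs _ haU _ hyc Finset.inter_subset_left
          · exact hmemprecs _ hbU _ hyc Finset.inter_subset_right
        have hc2 : ({a, b} : Finset (Finset N)).card = 2 := Finset.card_pair hab
        have heqp : ({a, b} : Finset (Finset N)) = precs Upper (a ∩ b) := by
          apply Finset.eq_of_subset_of_card_le hsubp
          rw [hc2]; exact hsit1 _ hyL
        refine ⟨a ∩ b, Finset.mem_filter.mpr ⟨hyL, by rw [← heqp, hc2]⟩, ?_⟩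
        rw [← heqp, h2]
    rw [hbij, Finset.card_powersetCard, Nat.choose_two_right]
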